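/- Let b ∈ ℕ. (i) There exists a constant C¹_b > 0 such that |∂_c^b f(r,c,t)| ≤ C¹_b t^b r^{−b} for all t ≥ 1, all r ≥ 1 and all 0 ≤ c ≤ 1/4. (ii) There exists a constant C²_b > 0 such that |∂_c^b f(r,0,t)| ≤ C²_b t^b r^{−b} for all t ≥ 1 and all r > 0. -/

import Mathlib

open Real Filter Finset Nat

noncomputable def pc7 (b n : ℕ) : ℝ :=
  (-1) ^ (n + b) * (n + b)! / (n ! * (2 * (n + b))!)

noncomputable def Phi7 (b : ℕ) (x : ℝ) : ℝ := ∑' n : ℕ, pc7 b n * x ^ n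

lemma abs_pc7_le (b n : ℕ) : |pc7 b n| ≤ 1 / n ! := by
  have h1 : (((n + b)! : ℕ) : ℝ) ≤ (((2 * (n + b))! : ℕ) : ℝ) := by
    exact_mod_cast Nat.factorial_le (by omega)
  have h2 : (0:ℝ) < (n ! : ℕ) := by positivity
  have h3 : (0:ℝ) < (((2 * (n + b))! : ℕ) : ℝ) := by positivity
  rw [pc7, abs_div, abs_mul, abs_pow, abs_neg, abs_one, one_pow, one_mul,
    Nat.abs_cast, abs_mul, Nat.abs_cast, Nat.abs_cast,
    div_le_div_iff₀ (by positivity) (by positivity)]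
  have := mul_le_mul_of_nonneg_right h1 h2.le
  nlinarith

lemma summable_phi7 (b : ℕ) (x : ℝ) : Summable fun n : ℕ => pc7 b n * x ^ n := by
  apply Summable.of_norm_bounded (Real.summable_pow_div_factorial |x|)
  intro n
  rw [Real.norm_eq_abs, abs_mul, abs_pow]
  calc |pc7 b n| * |x| ^ n ≤ (1 / n !) * |x| ^ n := by
        have := abs_pc7_le b n; gcongr
    _ = |x| ^ n / n ! := by ring

lemma summable_aux7 (R : ℝ) (hR : 0 ≤ R) : Summable (fun n : ℕ => (n:ℝ) * R ^ n / n !) := by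
  apply Summable.of_nonneg_of_le (fun n => by positivity) (fun n => ?_)
    (Real.summable_pow_div_factorial (2*R))
  have h1 : (n:ℝ) ≤ 2 ^ n := by exact_mod_cast (Nat.lt_two_pow_self (n := n)).le
  calc (n:ℝ) * R ^ n / n ! ≤ 2 ^ n * R ^ n / n ! := by gcongr
    _ = (2*R) ^ n / n ! := by rw [mul_pow]

lemma pc7_succ (b n : ℕ) : pc7 b (n+1) * ((n:ℝ)+1) = pc7 (b+1) n := by
  rw [pc7, pc7]
  have hidx : n + 1 + b = n + (b+1) := by omega
  rw [hidx, Nat.factorial_succ]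
  have h1 : (0:ℝ) < n ! := by positivity
  have h2 : (0:ℝ) < ((2 * (n + (b+1)))! : ℕ) := by positivity
  push_cast
  field_simp

lemma norm_deriv_term_le (b n : ℕ) (R : ℝ) (hR : 1 ≤ R) {y : ℝ} (hy : |y| ≤ R) :
    ‖pc7 b n * ((n:ℝ) * y ^ (n - 1))‖ ≤ (n:ℝ) * R ^ n / n ! := by
  have h0 : (0:ℝ) ≤ R := by linarith
  rw [Real.norm_eq_abs, abs_mul, abs_mul, Nat.abs_cast, abs_pow]
  calc |pc7 b n| * ((n:ℝ) * |y| ^ (n-1))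
      ≤ (1 / n !) * ((n:ℝ) * R ^ (n-1)) := by
        have := abs_pc7_le b n
        gcongr
    _ ≤ (1 / n !) * ((n:ℝ) * R ^ n) := by
        have hp : R ^ (n-1) ≤ R ^ n := pow_le_pow_right₀ hR (Nat.sub_le n 1)
        have h1 : (0:ℝ) ≤ 1 / (n ! : ℝ) := by positivity
        have h2 : (0:ℝ) ≤ (n:ℝ) := Nat.cast_nonneg n
        exact mul_le_mul_of_nonneg_left (mul_le_mul_of_nonneg_left hp h2) h1
    _ = (n:ℝ) * R ^ n / n ! := by ring

lemma hasDerivAt_Phi7 (b : ℕ) (x : ℝ) : HasDerivAt (Phi7 b) (Phi7 (b + 1) x) x := by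
  have hR : (1:ℝ) ≤ |x| + 1 := by linarith [abs_nonneg x]
  have hR0 : (0:ℝ) ≤ |x| + 1 := by positivity
  have hxmem : x ∈ Set.Ioo (-(|x|+1)) (|x|+1) := by
    constructor
    · have := neg_abs_le x; linarith
    · have := le_abs_self x; linarith
  have key : HasDerivAt (fun z => ∑' n : ℕ, pc7 b n * z ^ n)
      (∑' n : ℕ, pc7 b n * ((n:ℝ) * x ^ (n - 1))) x := by
    apply hasDerivAt_tsum_of_isPreconnected (summable_aux7 (|x|+1) hR0) isOpen_Ioo
      ((convex_Ioo _ _).isPreconnected)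
      (fun n y _ => (hasDerivAt_pow n y).const_mul (pc7 b n))
      (fun n y hy => norm_deriv_term_le b n _ hR (by rw [abs_le]; exact ⟨hy.1.le, hy.2.le⟩))
      (Set.mem_Ioo.2 ⟨by linarith, by linarith⟩)
      (summable_phi7 b 0) hxmem
  have hs : Summable fun n : ℕ => pc7 b n * ((n:ℝ) * x ^ (n - 1)) := by
    apply Summable.of_norm_bounded (summable_aux7 (|x|+1) hR0)
    exact fun n => norm_deriv_term_le b n _ hR (by linarith [le_abs_self x, abs_nonneg x])
  have heq : (∑' n : ℕ, pc7 b n * ((n:ℝ) * x ^ (n - 1))) = Phi7 (b+1) x := by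
    rw [hs.tsum_eq_zero_add, Phi7]
    simp only [Nat.cast_zero, zero_mul, mul_zero, zero_add, Nat.add_sub_cancel, Nat.cast_add,
      Nat.cast_one]
    apply tsum_congr
    intro n
    rw [← pc7_succ b n]
    ring
  rw [heq] at key
  exact key

lemma iteratedDeriv_Phi7 (b : ℕ) : iteratedDeriv b (Phi7 0) = Phi7 b := by
  induction b with
  | zero => rfl
  | succ n ih =>
    rw [iteratedDeriv_succ, ih]
    funext x
    exact (hasDerivAt_Phi7 n x).deriv

lemma phi7_zero {x : ℝ} (hx : 0 ≤ x) : Phi7 0 x = Real.cos (√x) := by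
  rw [Real.cos_eq_tsum, Phi7]
  apply tsum_congr
  intro n
  rw [pow_mul, Real.sq_sqrt hx, pc7]
  have h1 : (0:ℝ) < n ! := by positivity
  have h2 : (0:ℝ) < ((2 * (n + 0))! : ℕ) := by positivity
  simp only [Nat.add_zero]
  field_simp

lemma hasDerivAt_term7 (A θ : ℝ) (j : ℕ) {x : ℝ} (hx : 0 < x) :
    HasDerivAt (fun y => A * (Real.cos (√y + θ) / (√y) ^ j))
      (A / 2 * Real.cos (√x + θ + π/2) / (√x) ^ (j+1)
        - A * j / 2 * Real.cos (√x + θ) / (√x) ^ (j+2)) x := by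
  have hx' : x ≠ 0 := hx.ne'
  have hs : 0 < √x := Real.sqrt_pos.2 hx
  have hsne : √x ≠ 0 := hs.ne'
  have h1 : HasDerivAt Real.sqrt (1 / (2 * √x)) x := Real.hasDerivAt_sqrt hx'
  have h2 : HasDerivAt (fun y => √y + θ) (1 / (2 * √x)) x := h1.add_const θ
  have h3 : HasDerivAt (fun y => Real.cos (√y + θ))
      (-Real.sin (√x + θ) * (1 / (2 * √x))) x := (Real.hasDerivAt_cos _).comp x h2
  have h4 : HasDerivAt (fun y => (√y) ^ j) (((j:ℝ) * (√x) ^ (j-1)) * (1 / (2 * √x))) x :=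
    (hasDerivAt_pow j _).comp x h1
  have h5 := (h3.div h4 (pow_ne_zero j hsne)).const_mul A
  refine h5.congr_deriv ?_
  symm
  rw [Real.cos_add_pi_div_two]
  have hsq : √x * √x = x := Real.mul_self_sqrt hx.le
  rcases j with _ | i
  · simp only [Nat.cast_zero, pow_zero, Nat.zero_sub, zero_mul, mul_zero, zero_div]
    field_simp
    try ring
  · have e1 : i + 1 - 1 = i := rfl
    rw [e1]
    have e2 : ((i+1 : ℕ) : ℝ) = (i:ℝ) + 1 := by push_cast; ring
    rw [e2]
    field_simp
    ring

noncomputable def tt7 (b k : ℕ) (x : ℝ) : ℝ :=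
  Real.cos (√x + ((b:ℝ) - (k:ℝ)) * (π/2)) / (√x) ^ (b + k)

lemma phi7_rep (b : ℕ) : ∃ a : ℕ → ℝ, ∀ x : ℝ, 0 < x →
    Phi7 b x = ∑ k ∈ Finset.range (b+1), a k * tt7 b k x := by
  induction b with
  | zero =>
    refine ⟨fun _ => 1, fun x hx => ?_⟩
    rw [phi7_zero hx.le]
    simp [tt7]
  | succ m ih =>
    obtain ⟨a, ha⟩ := ih
    refine ⟨fun k => (if k ≤ m then a k / 2 else 0)
      + (if k = 0 then 0 else -(a (k-1) * ((m:ℝ) + ((k:ℝ) - 1)) / 2)), fun x hx => ?_⟩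
    have hs : 0 < √x := Real.sqrt_pos.2 hx
    have hstep : HasDerivAt (fun y => ∑ k ∈ Finset.range (m+1), a k * tt7 m k y)
        (∑ k ∈ Finset.range (m+1),
          (a k / 2 * Real.cos (√x + ((m:ℝ) - (k:ℝ)) * (π/2) + π/2) / (√x) ^ (m + k + 1)
           - a k * ((m + k : ℕ):ℝ) / 2 * Real.cos (√x + ((m:ℝ) - (k:ℝ)) * (π/2)) / (√x) ^ (m + k + 2))) x := by
      apply HasDerivAt.fun_sum
      intro k hk
      have h := hasDerivAt_term7 (a k) (((m:ℝ) - (k:ℝ)) * (π/2)) (m + k) hx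
      simpa only [tt7] using h
    have hev : Phi7 m =ᶠ[nhds x] fun y => ∑ k ∈ Finset.range (m+1), a k * tt7 m k y := by
      filter_upwards [Ioi_mem_nhds hx] with y hy
      exact ha y hy
    have hPhi : Phi7 (m+1) x = ∑ k ∈ Finset.range (m+1),
          (a k / 2 * Real.cos (√x + ((m:ℝ) - (k:ℝ)) * (π/2) + π/2) / (√x) ^ (m + k + 1)
           - a k * ((m + k : ℕ):ℝ) / 2 * Real.cos (√x + ((m:ℝ) - (k:ℝ)) * (π/2)) / (√x) ^ (m + k + 2)) := by
      rw [← (hasDerivAt_Phi7 m x).deriv, hev.deriv_eq, hstep.deriv]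
    rw [hPhi]
    have expand : ∀ k ∈ Finset.range (m+2), ((if k ≤ m then a k / 2 else 0)
        + (if k = 0 then 0 else -(a (k-1) * ((m:ℝ) + ((k:ℝ) - 1)) / 2))) * tt7 (m+1) k x
      = (if k ≤ m then a k / 2 else 0) * tt7 (m+1) k x
        + (if k = 0 then 0 else -(a (k-1) * ((m:ℝ) + ((k:ℝ) - 1)) / 2)) * tt7 (m+1) k x :=
      fun k _ => add_mul _ _ _
    rw [Finset.sum_congr rfl expand, Finset.sum_add_distrib]
    have hS1 : ∑ k ∈ Finset.range (m+2), (if k ≤ m then a k / 2 else 0) * tt7 (m+1) k x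
        = ∑ k ∈ Finset.range (m+1), a k / 2 * tt7 (m+1) k x := by
      rw [Finset.sum_range_succ, if_neg (by omega), zero_mul, add_zero]
      exact Finset.sum_congr rfl fun k hk =>
        by rw [if_pos (Nat.lt_succ_iff.mp (Finset.mem_range.mp hk))]
    have hS2 : ∑ k ∈ Finset.range (m+2),
          (if k = 0 then 0 else -(a (k-1) * ((m:ℝ) + ((k:ℝ) - 1)) / 2)) * tt7 (m+1) k x
        = ∑ k ∈ Finset.range (m+1), -(a k * ((m:ℝ) + (k:ℝ)) / 2) * tt7 (m+1) (k+1) x := by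
      rw [Finset.sum_range_succ']
      rw [if_pos rfl, zero_mul, add_zero]
      apply Finset.sum_congr rfl
      intro k hk
      rw [if_neg (Nat.succ_ne_zero k), Nat.add_sub_cancel]
      norm_num
    rw [hS1, hS2, ← Finset.sum_add_distrib]
    apply Finset.sum_congr rfl
    intro k hk
    simp only [tt7]
    rw [show (m+1) + k = m + k + 1 from by omega,
        show (m+1) + (k+1) = m + k + 2 from by omega,
        show √x + (((m+1:ℕ):ℝ) - (k:ℝ)) * (π/2) = √x + ((m:ℝ) - (k:ℝ)) * (π/2) + π/2 from by push_cast; ring,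
        show √x + (((m+1:ℕ):ℝ) - ((k+1:ℕ):ℝ)) * (π/2) = √x + ((m:ℝ) - (k:ℝ)) * (π/2) from by push_cast; ring]
    push_cast
    ring

lemma phi7_bound_large (b : ℕ) : ∃ A : ℝ, 0 < A ∧ ∀ x : ℝ, 3/4 ≤ x → |Phi7 b x| ≤ A / (√x) ^ b := by
  obtain ⟨a, ha⟩ := phi7_rep b
  refine ⟨(∑ k ∈ Finset.range (b+1), |a k| * 2 ^ k) + 1, by positivity, fun x hx => ?_⟩
  have hx0 : 0 < x := by linarith
  have hs : 0 < √x := Real.sqrt_pos.2 hx0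
  have hhalf : 1/2 ≤ √x := by
    have : √(1/4) ≤ √x := Real.sqrt_le_sqrt (by linarith)
    rwa [show (1/4:ℝ) = (1/2)^2 by norm_num, Real.sqrt_sq (by norm_num : (0:ℝ) ≤ 1/2)] at this
  rw [ha x hx0]
  calc |∑ k ∈ Finset.range (b+1), a k * tt7 b k x|
      ≤ ∑ k ∈ Finset.range (b+1), |a k * tt7 b k x| := Finset.abs_sum_le_sum_abs _ _
    _ ≤ ∑ k ∈ Finset.range (b+1), (|a k| * 2 ^ k) / (√x) ^ b := by
        apply Finset.sum_le_sum
        intro k hk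
        rw [abs_mul]
        have h1 : |tt7 b k x| ≤ 2 ^ k / (√x) ^ b := by
          rw [tt7, abs_div, abs_pow, abs_of_pos hs]
          have hc : |Real.cos (√x + ((b:ℝ) - (k:ℝ)) * (π/2))| ≤ 1 := Real.abs_cos_le_one _
          calc |Real.cos (√x + ((b:ℝ) - (k:ℝ)) * (π/2))| / (√x) ^ (b+k)
              ≤ 1 / (√x) ^ (b+k) := by gcongr
            _ ≤ 2 ^ k / (√x) ^ b := by
                rw [div_le_div_iff₀ (by positivity) (by positivity), pow_add, one_mul]
                calc (√x) ^ b = (√x) ^ b * 1 := by ring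
                  _ ≤ (√x) ^ b * (2 * √x) ^ k := by
                      have : (1:ℝ) ≤ 2 * √x := by linarith
                      have := one_le_pow₀ this (n := k)
                      gcongr
                  _ = 2 ^ k * ((√x) ^ b * (√x) ^ k) := by rw [mul_pow]; ring
        calc |a k| * |tt7 b k x| ≤ |a k| * (2 ^ k / (√x) ^ b) := by
              gcongr
          _ = |a k| * 2 ^ k / (√x) ^ b := by ring
    _ = (∑ k ∈ Finset.range (b+1), |a k| * 2 ^ k) / (√x) ^ b := by
        rw [Finset.sum_div]
    _ ≤ ((∑ k ∈ Finset.range (b+1), |a k| * 2 ^ k) + 1) / (√x) ^ b := by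
        gcongr
        linarith

lemma Phi7_eq (b : ℕ) (x : ℝ) : Phi7 b x = ∑' n : ℕ, pc7 b n * x ^ n := rfl

noncomputable def M47 : ℝ := ∑' n : ℕ, (4:ℝ) ^ n / n !

lemma M47_nonneg : 0 ≤ M47 := tsum_nonneg fun n => by positivity

lemma phi7_bound_small (b : ℕ) {x : ℝ} (h0 : 0 ≤ x) (h4 : x ≤ 4) : |Phi7 b x| ≤ M47 := by
  rw [Phi7_eq]
  have hsum := summable_phi7 b x
  calc |∑' n : ℕ, pc7 b n * x ^ n| ≤ ∑' n : ℕ, |pc7 b n * x ^ n| := by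
        have h := norm_tsum_le_tsum_norm (f := fun n : ℕ => pc7 b n * x ^ n)
          (by simpa only [Real.norm_eq_abs] using hsum.abs)
        simpa only [Real.norm_eq_abs] using h
    _ ≤ M47 := by
        apply Summable.tsum_le_tsum _ hsum.abs (Real.summable_pow_div_factorial 4)
        intro n
        rw [abs_mul, abs_pow, abs_of_nonneg h0]
        calc |pc7 b n| * x ^ n ≤ (1 / n !) * 4 ^ n := by
              have h := abs_pc7_le b n
              have : x ^ n ≤ 4 ^ n := pow_le_pow_left₀ h0 h4 n
              have hp : (0:ℝ) ≤ x ^ n := by positivity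
              have h2 : (0:ℝ) ≤ 1 / (n ! : ℝ) := by positivity
              nlinarith [abs_nonneg (pc7 b n)]
          _ = 4 ^ n / n ! := by ring

lemma iteratedDeriv_phi7_affine (p q : ℝ) (b : ℕ) :
    iteratedDeriv b (fun y => Phi7 0 (p + q * y))
      = fun x => q ^ b * Phi7 b (p + q * x) := by
  induction b with
  | zero => funext x; simp
  | succ n ih =>
    funext x
    rw [iteratedDeriv_succ, ih]
    have h1 : HasDerivAt (fun y : ℝ => p + q * y) q x := by
      simpa using ((hasDerivAt_id x).const_mul q).const_add p
    have h2 : HasDerivAt (fun y => Phi7 n (p + q * y)) (Phi7 (n+1) (p + q * x) * q) x :=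
      (hasDerivAt_Phi7 n _).comp x h1
    have h3 : HasDerivAt (fun y => q ^ n * Phi7 n (p + q * y))
        (q ^ n * (Phi7 (n+1) (p + q * x) * q)) x := h2.const_mul _
    rw [h3.deriv]
    ring

lemma iteratedDeriv_g7 (b : ℕ) (t r c : ℝ) (ht : 0 ≤ t) (h : 0 < r ^ 2 - c) :
    iteratedDeriv b (fun c' : ℝ => Real.cos (t * √(r ^ 2 - c'))) c
      = (-(t^2)) ^ b * Phi7 b (t^2 * (r^2 - c)) := by
  have heq : (fun c' : ℝ => Real.cos (t * √(r ^ 2 - c')))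
      =ᶠ[nhds c] fun c' => Phi7 0 (t^2 * r^2 + (-(t^2)) * c') := by
    filter_upwards [Iio_mem_nhds (show c < r^2 by linarith)] with y hy
    have hy' : (0:ℝ) ≤ r^2 - y := by
      have : y < r^2 := hy
      linarith
    have harg : t^2 * r^2 + (-(t^2)) * y = t^2 * (r^2 - y) := by ring
    rw [harg, phi7_zero (by positivity), Real.sqrt_mul (sq_nonneg t), Real.sqrt_sq ht]
  rw [Filter.EventuallyEq.iteratedDeriv_eq b heq,
      congrFun (iteratedDeriv_phi7_affine (t^2*r^2) (-(t^2)) b) c]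
  congr 2
  ring

/-- Pointwise estimates for the `b`-th derivative in `c` of
`f(r,c,t) = cos(t·√(r²−c))` in the high-frequency region. -/
theorem stmt_7 (b : ℕ) (hb : 1 ≤ b) :
    (∃ C : ℝ, 0 < C ∧ ∀ t : ℝ, 1 ≤ t → ∀ r : ℝ, 1 ≤ r → ∀ c ∈ Set.Icc (0:ℝ) (1/4),
      |iteratedDeriv b (fun c' : ℝ => Real.cos (t * Real.sqrt (r ^ 2 - c'))) c|
        ≤ C * t ^ b / r ^ b) ∧
    (∃ C : ℝ, 0 < C ∧ ∀ t : ℝ, 1 ≤ t → ∀ r : ℝ, 0 < r →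
      |iteratedDeriv b (fun c' : ℝ => Real.cos (t * Real.sqrt (r ^ 2 - c'))) 0|
        ≤ C * t ^ b / r ^ b) := by
  obtain ⟨A, hA, hAb⟩ := phi7_bound_large b
  constructor
  · refine ⟨A * 2 ^ b, by positivity, fun t ht r hr c hc => ?_⟩
    obtain ⟨hc0, hc4⟩ := hc
    have ht0 : (0:ℝ) < t := by linarith
    have hr0 : (0:ℝ) < r := by linarith
    have hu : 0 < r^2 - c := by nlinarith
    rw [iteratedDeriv_g7 b t r c ht0.le hu, abs_mul, abs_pow, abs_neg,
      abs_of_nonneg (sq_nonneg t)]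
    set x := t^2 * (r^2 - c) with hxdef
    have hx34 : (3:ℝ)/4 ≤ x := by
      have h1 : (3:ℝ)/4 ≤ r^2 - c := by nlinarith
      have h2 : (1:ℝ) ≤ t^2 := by nlinarith
      calc (3:ℝ)/4 = 1 * (3/4) := by norm_num
        _ ≤ t^2 * (r^2 - c) := by nlinarith
    have hxpos : (0:ℝ) < x := by nlinarith
    have hsx : √x = t * √(r^2 - c) := by
      rw [hxdef, Real.sqrt_mul (sq_nonneg t), Real.sqrt_sq ht0.le]
    have hsu : (0:ℝ) < √(r^2 - c) := Real.sqrt_pos.2 hu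
    have hru : r ≤ 2 * √(r^2 - c) := by
      have h1 : r / 2 ≤ √(r^2 - c) := by
        rw [show r/2 = √((r/2)^2) by rw [Real.sqrt_sq (by linarith)]]
        apply Real.sqrt_le_sqrt
        nlinarith
      linarith
    calc (t^2)^b * |Phi7 b x| ≤ (t^2)^b * (A / (√x)^b) := by
          gcongr
          exact hAb x hx34
      _ = A * t^b / (√(r^2 - c))^b := by
          rw [hsx, mul_pow, ← pow_mul]
          field_simp
          ring
      _ ≤ A * 2^b * t^b / r^b := by
          rw [div_le_div_iff₀ (by positivity) (by positivity)]
          calc A * t^b * r^b ≤ A * t^b * (2 * √(r^2 - c))^b := by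
                gcongr
            _ = A * 2^b * t^b * (√(r^2-c))^b := by rw [mul_pow]; ring
  · refine ⟨A + M47 + 1, by have := M47_nonneg; linarith, fun t ht r hr => ?_⟩
    have ht0 : (0:ℝ) < t := by linarith
    have hu : 0 < r^2 - (0:ℝ) := by nlinarith
    rw [iteratedDeriv_g7 b t r 0 ht0.le hu, abs_mul, abs_pow, abs_neg,
      abs_of_nonneg (sq_nonneg t), sub_zero]
    set x := t^2 * r^2 with hxdef
    have hxpos : (0:ℝ) < x := by positivity
    have hsx : √x = t * r := by
      rw [hxdef, Real.sqrt_mul (sq_nonneg t), Real.sqrt_sq ht0.le, Real.sqrt_sq hr.le]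
    have hM : 0 ≤ M47 := M47_nonneg
    by_cases hx : (3:ℝ)/4 ≤ x
    · calc (t^2)^b * |Phi7 b x| ≤ (t^2)^b * (A / (√x)^b) := by
            gcongr
            exact hAb x hx
        _ = A * t^b / r^b := by
            rw [hsx, mul_pow, ← pow_mul]
            field_simp
            ring
        _ ≤ (A + M47 + 1) * t^b / r^b := by
            gcongr
            linarith
    · push_neg at hx
      have htr1 : t * r ≤ 1 := by nlinarith
      have hts : (0:ℝ) < t * r := by positivity
      calc (t^2)^b * |Phi7 b x| ≤ (t^2)^b * M47 := by
            gcongr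
            exact phi7_bound_small b hxpos.le (by nlinarith)
        _ ≤ (A + M47 + 1) * t^b / r^b := by
            rw [le_div_iff₀ (by positivity)]
            have h1 : (t*r)^b ≤ 1 := pow_le_one₀ hts.le htr1
            have h2 : (t^2)^b * M47 * r^b = M47 * (t^b * (t*r)^b) := by
              rw [sq, mul_pow, mul_pow]
              ring
            rw [h2]
            have h3 : t^b * (t*r)^b ≤ t^b * 1 := by
              gcongr
            have h4 : M47 * (t^b * (t*r)^b) ≤ M47 * t^b := by nlinarith [pow_pos ht0 b]
            nlinarith [pow_pos ht0 b]
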